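/- For n = 6 and the choice c over X = {0,1,2,3,4,5} defined by c(A) = A ∖ {0} if 0 ∈ A and |A| ≥ 4, and c(A) = A otherwise: c satisfies Axiom α, dem(c) ≤ 5, and lib(c) ≥ 10. -/
import Mathlib


/-- `r` rationalizes the quasi-choice `c`: `c A` is the set of `r`-maximal elements of `A`. -/
def Rationalizes {X : Type*} (r : X → X → Prop) (c : Set X → Set X) : Prop :=
  ∀ A : Set X, c A = {a ∈ A | ∀ b ∈ A, ¬ r b a}

/-- `c` is freely rationalizable (a ballot): rationalized by an arbitrary binary relation. -/
def FreelyRat {X : Type*} (c : Set X → Set X) : Prop :=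
  ∃ r : X → X → Prop, Rationalizes r c

/-- `c` is asymmetrically rationalizable. -/
def AsymRat {X : Type*} (c : Set X → Set X) : Prop :=
  ∃ r : X → X → Prop, (∀ a b, r a b → ¬ r b a) ∧ Rationalizes r c

/-- Contractiveness: `c` is a quasi-choice. -/
def IsQuasiChoice {X : Type*} (c : Set X → Set X) : Prop :=
  ∀ A : Set X, c A ⊆ A

/-- Axiom α (Chernoff, Standard Contraction Consistency). -/
def AxiomAlpha {X : Type*} (c : Set X → Set X) : Prop :=
  ∀ ⦃A B : Set X⦄ ⦃x : X⦄, A ⊆ B → x ∈ A → x ∈ c B → x ∈ c A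

/-- Axiom γ (Standard Expansion Consistency). -/
def AxiomGamma {X : Type*} (c : Set X → Set X) : Prop :=
  ∀ ⦃A B : Set X⦄ ⦃x : X⦄, x ∈ c A → x ∈ c B → x ∈ c (A ∪ B)

/-- A liberal representation of `c` by the family of ballots `v`. -/
def IsLiberalRep {X : Type*} (c : Set X → Set X) {k : ℕ} (v : Fin k → Set X → Set X) : Prop :=
  (∀ i, FreelyRat (v i)) ∧
    ∀ A : Set X, ∀ x ∈ A, (x ∈ c A ↔ ∃ i, x ∈ v i A)

/-- A democratic representation of `c` by the family of ballots `v`: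
an item is chosen iff more than half of the ballots endorse it. -/
def IsDemRep {X : Type*} (c : Set X → Set X) {k : ℕ} (v : Fin k → Set X → Set X) : Prop :=
  (∀ i, FreelyRat (v i)) ∧
    ∀ A : Set X, ∀ x ∈ A, (x ∈ c A ↔ 2 * Nat.card {i : Fin k // x ∈ v i A} > k)

/-- The liberal number of `c`: the minimum size of a liberal representation (⊤ if none). -/
noncomputable def lib {X : Type*} (c : Set X → Set X) : ℕ∞ :=
  sInf {n : ℕ∞ | ∃ (k : ℕ) (v : Fin k → Set X → Set X), 0 < k ∧ IsLiberalRep c v ∧ n = (k : ℕ∞)}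

/-- The democratic number of `c`: the minimum size of a democratic representation (⊤ if none). -/
noncomputable def dem {X : Type*} (c : Set X → Set X) : ℕ∞ :=
  sInf {n : ℕ∞ | ∃ (k : ℕ) (v : Fin k → Set X → Set X), 0 < k ∧ IsDemRep c v ∧ n = (k : ℕ∞)}

/-- `c` is `s`-majoritarian: some finite family of ballots selects exactly the items
endorsed by a share of ballots strictly larger than `s`. -/
def Majoritarian {X : Type*} (s : ℝ) (c : Set X → Set X) : Prop :=
  ∃ (k : ℕ) (v : Fin k → Set X → Set X), 0 < k ∧ (∀ i, FreelyRat (v i)) ∧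
    ∀ A : Set X, ∀ x ∈ A,
      (x ∈ c A ↔ (Nat.card {i : Fin k // x ∈ v i A} : ℝ) / (k : ℝ) > s)

open Classical in
/-- The choice over `{0,…,5}` selecting everything except `0` on menus containing `0`
of size at least `4`. -/
noncomputable def c15 : Set (Fin 6) → Set (Fin 6) := fun A =>
  if (0 : Fin 6) ∈ A ∧ 4 ≤ A.ncard then A \ {0} else A


section Aux15

lemma c15_mem_iff {A : Set (Fin 6)} {x : Fin 6} (hx : x ∈ A) :
    x ∈ c15 A ↔ ¬ (x = 0 ∧ 4 ≤ A.ncard) := by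
  unfold c15
  split_ifs with h
  · simp only [Set.mem_diff, Set.mem_singleton_iff, hx, true_and]
    tauto
  · simp only [hx, true_iff]
    rintro ⟨rfl, h4⟩
    exact h ⟨hx, h4⟩

lemma alpha15 : AxiomAlpha c15 := by
  intro A B x hAB hx hxB
  rw [c15_mem_iff hx]
  rw [c15_mem_iff (hAB hx)] at hxB
  rintro ⟨rfl, h4⟩
  exact hxB ⟨rfl, le_trans h4 (Set.ncard_le_ncard hAB (Set.toFinite B))⟩

noncomputable def dv : Fin 5 → Set (Fin 6) → Set (Fin 6) := fun i A =>
  {a ∈ A | ∀ b ∈ A, ¬ (b = i.succ ∧ a = 0)}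

lemma count_pos (A : Set (Fin 6)) (x : Fin 6) (hx : x ∈ A) (hx0 : x ≠ 0) :
    Nat.card {i : Fin 5 // x ∈ dv i A} = 5 := by
  have : ∀ i : Fin 5, x ∈ dv i A := by
    intro i
    exact ⟨hx, fun b _ hb => hx0 hb.2⟩
  rw [Nat.card_congr (Equiv.subtypeUnivEquiv this)]
  simp

lemma count_zero (A : Set (Fin 6)) (h0 : (0:Fin 6) ∈ A) :
    Nat.card {i : Fin 5 // (0:Fin 6) ∈ dv i A} = 6 - A.ncard := by
  have hset : {i : Fin 5 | (0:Fin 6) ∈ dv i A} = {i : Fin 5 | (i.succ : Fin 6) ∉ A} := by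
    ext i
    simp only [Set.mem_setOf_eq, dv, Set.mem_setOf_eq]
    constructor
    · rintro ⟨-, h⟩ hmem
      exact h _ hmem ⟨rfl, trivial⟩
    · intro h
      exact ⟨h0, fun b hb hc => h (hc.1 ▸ hb)⟩
  have hcard : Nat.card {i : Fin 5 // (0:Fin 6) ∈ dv i A} =
      {i : Fin 5 | (i.succ : Fin 6) ∉ A}.ncard := by
    rw [← hset]
    exact Nat.card_coe_set_eq _
  have himg : Fin.succ '' {i : Fin 5 | (i.succ : Fin 6) ∉ A} = Aᶜ := by
    ext x
    simp only [Set.mem_image, Set.mem_setOf_eq, Set.mem_compl_iff]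
    constructor
    · rintro ⟨i, hi, rfl⟩; exact hi
    · intro hxA
      have hx0 : x ≠ 0 := fun h => hxA (h ▸ h0)
      obtain ⟨i, hi⟩ := Fin.exists_succ_eq.mpr hx0
      exact ⟨i, hi ▸ hxA, hi⟩
  have hinj := Set.ncard_image_of_injective {i : Fin 5 | (i.succ : Fin 6) ∉ A}
    (Fin.succ_injective 5)
  rw [himg] at hinj
  have hcompl : A.ncard + Aᶜ.ncard = 6 := by
    rw [Set.ncard_add_ncard_compl]; simp
  omega

lemma demrep15 : IsDemRep c15 dv := by
  constructor
  · intro i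
    exact ⟨fun b a => b = i.succ ∧ a = 0, fun A => rfl⟩
  · intro A x hx
    rw [c15_mem_iff hx]
    rcases eq_or_ne x 0 with rfl | hx0
    · rw [count_zero A hx]
      have h6 : A.ncard ≤ 6 := by
        have := Set.ncard_le_ncard (Set.subset_univ A) (Set.toFinite _)
        simpa [Set.ncard_univ] using this
      constructor
      · intro h; omega
      · intro h hc; omega
    · rw [count_pos A x hx hx0]
      simp [hx0]

noncomputable def P15 : Finset (Finset (Fin 6)) :=
  ({1,2,3,4,5} : Finset (Fin 6)).powersetCard 2

lemma P15_card : P15.card = 10 := by decide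

lemma P15_mem {s : Finset (Fin 6)} (hs : s ∈ P15) : s.card = 2 ∧ (0:Fin 6) ∉ s := by
  rw [P15, Finset.mem_powersetCard] at hs
  refine ⟨hs.2, fun h0 => ?_⟩
  have := hs.1 h0
  simp at this

lemma menu_ncard {s : Finset (Fin 6)} (h0 : (0:Fin 6) ∉ s) :
    (insert (0:Fin 6) (↑s : Set (Fin 6))).ncard = s.card + 1 := by
  rw [Set.ncard_insert_of_notMem (by simpa using h0), Set.ncard_coe_finset]

lemma lib15 {k : ℕ} (v : Fin k → Set (Fin 6) → Set (Fin 6)) (hk : 0 < k)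
    (hrep : IsLiberalRep c15 v) : 10 ≤ k := by
  obtain ⟨hballot, hiff⟩ := hrep
  classical
  have hex : ∀ s ∈ P15, ∃ i, (0:Fin 6) ∈ v i (insert 0 ↑s) := by
    intro s hs
    obtain ⟨hc2, h0s⟩ := P15_mem hs
    have h0 : (0:Fin 6) ∈ (insert 0 ↑s : Set (Fin 6)) := Set.mem_insert _ _
    rw [← hiff _ _ h0, c15_mem_iff h0, menu_ncard h0s, hc2]
    rintro ⟨-, h⟩; omega
  set φ : Finset (Fin 6) → Fin k := fun s =>
    if h : ∃ i, (0:Fin 6) ∈ v i (insert 0 ↑s) then h.choose else ⟨0, hk⟩ with hφ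
  have hφ_spec : ∀ s ∈ P15, (0:Fin 6) ∈ v (φ s) (insert 0 ↑s) := by
    intro s hs
    have h := hex s hs
    simp only [hφ, dif_pos h]
    exact h.choose_spec
  have hinj : Set.InjOn φ ↑P15 := by
    intro s hs t ht hst
    by_contra hne
    obtain ⟨r, hr⟩ := hballot (φ s)
    have h1 : (0:Fin 6) ∈ v (φ s) (insert 0 ↑s) := hφ_spec s hs
    have h2 : (0:Fin 6) ∈ v (φ s) (insert 0 ↑t) := hst ▸ hφ_spec t ht
    rw [hr] at h1 h2
    have hbig : (0:Fin 6) ∈ v (φ s) (insert 0 ↑(s ∪ t)) := by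
      rw [hr]
      refine ⟨Set.mem_insert _ _, fun b hb => ?_⟩
      rcases hb with rfl | hb
      · exact h1.2 0 (Set.mem_insert _ _)
      · rcases Finset.mem_union.mp (by simpa using hb) with h | h
        · exact h1.2 b (Set.mem_insert_of_mem _ (by simpa using h))
        · exact h2.2 b (Set.mem_insert_of_mem _ (by simpa using h))
    obtain ⟨hcs, h0s⟩ := P15_mem hs
    obtain ⟨hct, h0t⟩ := P15_mem ht
    have h0u : (0:Fin 6) ∉ s ∪ t := by simp [h0s, h0t]
    have hcard : 3 ≤ (s ∪ t).card := by
      have hss : s ⊂ s ∪ t := by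
        refine ⟨Finset.subset_union_left, fun hsub => ?_⟩
        exact hne (Finset.eq_of_subset_of_card_le
          (fun x hx => hsub (Finset.mem_union_right _ hx)) (by omega)).symm
      have := Finset.card_lt_card hss
      omega
    have h0mem : (0:Fin 6) ∈ (insert 0 ↑(s ∪ t) : Set (Fin 6)) := Set.mem_insert _ _
    have : (0:Fin 6) ∈ c15 (insert 0 ↑(s ∪ t)) := (hiff _ _ h0mem).mpr ⟨φ s, hbig⟩
    rw [c15_mem_iff h0mem, menu_ncard h0u] at this
    exact this ⟨rfl, by omega⟩
  calc 10 = P15.card := P15_card.symm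
    _ ≤ (Finset.univ : Finset (Fin k)).card :=
        Finset.card_le_card_of_injOn φ (fun _ _ => Finset.mem_univ _) hinj
    _ = k := by simp

end Aux15

theorem stmt15 : AxiomAlpha c15 ∧ dem c15 ≤ 5 ∧ 10 ≤ lib c15 := by
  refine ⟨alpha15, ?_, ?_⟩
  · exact sInf_le ⟨5, dv, by norm_num, demrep15, rfl⟩
  · refine le_sInf ?_
    rintro n ⟨k, v, hk, hrep, rfl⟩
    exact_mod_cast lib15 v hk hrep
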